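/- Let P_n be the path graph on n vertices with n ≥ 2 and let c be a proper coloring of P_n using exactly two colors. Then the minimum cardinality of an up-color dominating c-set of P_n is at least ⌊n/2⌋ and at most ⌈n/2⌉. -/
import Mathlib

/-- `D` is an up-color dominating `c`-set of `G`. -/
def IsUCDomSet {V : Type*} (G : SimpleGraph V) (c : V → ℕ) (D : Finset V) : Prop :=
  (∀ v ∉ D, ∃ d ∈ D, G.Adj v d ∧ c v < c d) ∧ ∀ d ∈ D, 1 ≤ c d

/-- The path graph on `n` vertices: `vᵢ` is adjacent to `vᵢ₊₁`. -/
def pathGr (n : ℕ) : SimpleGraph (Fin n) :=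
  SimpleGraph.fromRel (fun i j => (j : ℕ) = (i : ℕ) + 1)

lemma path_adj' {n : ℕ} (u v : Fin n) (h : (v : ℕ) = (u : ℕ) + 1) :
    (pathGr n).Adj u v := by
  simp only [pathGr, SimpleGraph.fromRel_adj]
  exact ⟨Fin.ne_of_val_ne (by omega), Or.inl h⟩

lemma count_mod (n r : ℕ) (hr : r ≤ 1) :
    ((Finset.range n).filter (fun i => i % 2 = r)).card = (n + 1 - r) / 2 := by
  induction n with
  | zero => simp; omega
  | succ m ih =>
    rw [Finset.range_add_one, Finset.filter_insert]
    by_cases h : m % 2 = r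
    · rw [if_pos h, Finset.card_insert_of_notMem (by simp)]
      omega
    · rw [if_neg h]
      omega

lemma count_fin (n r : ℕ) (hr : r ≤ 1) :
    (Finset.univ.filter (fun i : Fin n => i.val % 2 = r)).card = (n + 1 - r) / 2 := by
  rw [← count_mod n r hr]
  rw [← Finset.card_image_of_injective _ Fin.val_injective]
  congr 1
  ext k
  simp only [Finset.mem_image, Finset.mem_filter, Finset.mem_univ, true_and, Finset.mem_range]
  constructor
  · rintro ⟨i, hi, rfl⟩; exact ⟨i.isLt, hi⟩
  · rintro ⟨hk, hkr⟩; exact ⟨⟨k, hk⟩, hkr, rfl⟩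


lemma helper (n : ℕ) (hn : 2 ≤ n) (c : Fin n → ℕ) (a b r : ℕ) (hab : a < b) (hr : r ≤ 1)
    (halt : ∀ i : Fin n, c i = if i.val % 2 = r then b else a) :
    (∀ D : Finset (Fin n), IsUCDomSet (pathGr n) c D → n / 2 ≤ D.card) ∧
      (∃ D : Finset (Fin n), IsUCDomSet (pathGr n) c D ∧ D.card ≤ (n + 1) / 2) := by
  have hle : ∀ i : Fin n, c i ≤ b := by
    intro i; rw [halt i]; split <;> omega
  constructor
  · intro D ⟨hdom, _⟩
    have hsub : Finset.univ.filter (fun i : Fin n => i.val % 2 = r) ⊆ D := by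
      intro i hi
      by_contra h
      obtain ⟨d, _, _, hlt⟩ := hdom i h
      have hci : c i = b := by
        rw [halt i, if_pos (Finset.mem_filter.mp hi).2]
      have := hle d
      omega
    have := Finset.card_le_card hsub
    rw [count_fin n r hr] at this
    omega
  · refine ⟨Finset.univ.filter (fun i : Fin n => i.val % 2 = r), ⟨?_, ?_⟩, ?_⟩
    · intro v hv
      rw [Finset.mem_filter] at hv
      have hvr : v.val % 2 ≠ r := fun h => hv ⟨Finset.mem_univ v, h⟩
      have hcv : c v = a := by rw [halt v, if_neg hvr]
      by_cases hlt : v.val + 1 < n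
      · refine ⟨⟨v.val + 1, hlt⟩, ?_, ?_, ?_⟩
        · rw [Finset.mem_filter]
          refine ⟨Finset.mem_univ _, ?_⟩
          show (v.val + 1) % 2 = r
          omega
        · exact path_adj' v ⟨v.val + 1, hlt⟩ rfl
        · rw [hcv, halt ⟨v.val + 1, hlt⟩]
          rw [if_pos (show (v.val + 1) % 2 = r by omega)]
          exact hab
      · have hv1 : 1 ≤ v.val := by have := v.isLt; omega
        refine ⟨⟨v.val - 1, by omega⟩, ?_, ?_, ?_⟩
        · rw [Finset.mem_filter]
          refine ⟨Finset.mem_univ _, ?_⟩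
          show (v.val - 1) % 2 = r
          omega
        · exact (path_adj' ⟨v.val - 1, by omega⟩ v (by simp; omega)).symm
        · rw [hcv, halt ⟨v.val - 1, by omega⟩]
          rw [if_pos (show (v.val - 1) % 2 = r by omega)]
          exact hab
    · intro d hd
      have : d.val % 2 = r := (Finset.mem_filter.mp hd).2
      rw [halt d, if_pos this]
      omega
    · rw [count_fin n r hr]
      omega

theorem stmt_7 (n : ℕ) (hn : 2 ≤ n)
    (c : Fin n → ℕ) (hc : ∀ ⦃u v⦄, (pathGr n).Adj u v → c u ≠ c v)
    (h2 : (Finset.univ.image c).card = 2) :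
    (∀ D : Finset (Fin n), IsUCDomSet (pathGr n) c D → n / 2 ≤ D.card) ∧
      (∃ D : Finset (Fin n), IsUCDomSet (pathGr n) c D ∧ D.card ≤ (n + 1) / 2) := by
  have h0 : 0 < n := by omega
  have h1 : 1 < n := by omega
  set a := c ⟨0, h0⟩ with ha
  set b := c ⟨1, h1⟩ with hb
  have hab : a ≠ b := hc (path_adj' ⟨0, h0⟩ ⟨1, h1⟩ rfl)
  -- the image is exactly {a, b}
  have himg : Finset.univ.image c = {a, b} := by
    apply (Finset.eq_of_subset_of_card_le ?_ ?_).symm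
    · intro x hx
      simp only [Finset.mem_insert, Finset.mem_singleton] at hx
      rcases hx with rfl | rfl
      · exact Finset.mem_image_of_mem c (Finset.mem_univ _)
      · exact Finset.mem_image_of_mem c (Finset.mem_univ _)
    · rw [h2, Finset.card_insert_of_notMem (by simpa using hab), Finset.card_singleton]
  have hmem : ∀ i : Fin n, c i = a ∨ c i = b := by
    intro i
    have : c i ∈ Finset.univ.image c := Finset.mem_image_of_mem c (Finset.mem_univ _)
    rw [himg] at this
    simpa using this
  -- alternation
  have halt : ∀ k (hk : k < n), c ⟨k, hk⟩ = if k % 2 = 0 then a else b := by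
    intro k
    induction k with
    | zero => intro hk; simp [ha]
    | succ m ih =>
      intro hk
      have hm := ih (by omega)
      have hne := hc (path_adj' ⟨m, by omega⟩ ⟨m + 1, hk⟩ rfl)
      rw [hm] at hne
      by_cases hp : m % 2 = 0
      · rw [if_pos hp] at hne
        rw [if_neg (by omega : ¬(m + 1) % 2 = 0)]
        rcases hmem ⟨m + 1, hk⟩ with h | h
        · exact absurd h.symm hne
        · exact h
      · rw [if_neg hp] at hne
        rw [if_pos (by omega : (m + 1) % 2 = 0)]
        rcases hmem ⟨m + 1, hk⟩ with h | h
        · exact h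
        · exact absurd h.symm hne
  rcases Nat.lt_or_ge a b with h | h
  · refine helper n hn c a b 1 h (le_refl 1) ?_
    intro i
    have := halt i.val i.isLt
    rcases Nat.mod_two_eq_zero_or_one i.val with hp | hp <;>
      simp only [hp] at this ⊢ <;> simpa using this
  · refine helper n hn c b a 0 (by omega) (by omega) ?_
    intro i
    have := halt i.val i.isLt
    rcases Nat.mod_two_eq_zero_or_one i.val with hp | hp <;>
      simp only [hp] at this ⊢ <;> simpa using this
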